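/- In the *-algebra W of the previous context, with S(λE)* = −λE where λ = q−q⁻¹, the involution compatibility holds for E: (λE ▷ W(s,t))* = S(λE)* ▷ W(s,t)* for all s,t ∈ ℂ, i.e., applying * to (e^{−2πγs} − e^{2πγs}) W(s+i, t−i) yields −λE ▷ W(−conj(s), −conj(t)). -/
import Mathlib


/-- `q = e^{2πiγ}`. -/
noncomputable def qOf (γ : ℝ) : ℂ := Complex.exp ((2 * Real.pi * γ : ℝ) * Complex.I)

/-- `e^{2πγ s}` for complex `s`. -/
noncomputable def e2 (γ : ℝ) (s : ℂ) : ℂ := Complex.exp ((2 * Real.pi * γ : ℝ) * s)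

/-- In the *-algebra `W` (with `W(s,t)* = W(−s̄,−t̄)`,
`λE ▷ W(s,t) = (e^{−2πγs}−e^{2πγs})W(s+i,t−i)`, `λ = q−q⁻¹`, `q = e^{2πiγ} ≠ ±1`),
the involution compatibility holds for `E`:
`(λE ▷ W(s,t))* = S(λE)* ▷ W(s,t)* = −λE ▷ W(−s̄,−t̄)`. -/
theorem statement15 {A : Type*} [Ring A] [Algebra ℂ A] [StarRing A] [StarModule ℂ A]
    (γ : ℝ) (hq1 : qOf γ ≠ 1) (hqm1 : qOf γ ≠ -1)
    (W : ℂ → ℂ → A)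
    (hstarW : ∀ s t : ℂ,
      star (W s t) = W (-(starRingEnd ℂ s)) (-(starRingEnd ℂ t)))
    (actE : A →ₗ[ℂ] A)
    (hE : ∀ s t : ℂ, actE (W s t) =
      ((qOf γ - (qOf γ)⁻¹)⁻¹ * (e2 γ (-s) - e2 γ s)) • W (s + Complex.I) (t - Complex.I)) :
    ∀ s t : ℂ,
      star ((qOf γ - (qOf γ)⁻¹) • actE (W s t)) =
        -((qOf γ - (qOf γ)⁻¹) • actE (star (W s t))) := by
  intro s t
  have hq0 : qOf γ ≠ 0 := Complex.exp_ne_zero _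
  have hlam : qOf γ - (qOf γ)⁻¹ ≠ 0 := by
    intro h
    have h1 : qOf γ = (qOf γ)⁻¹ := sub_eq_zero.mp h
    have h2 : qOf γ * qOf γ = 1 := by
      nth_rewrite 2 [h1]; exact mul_inv_cancel₀ hq0
    have h3 : (qOf γ - 1) * (qOf γ + 1) = 0 := by ring_nf; linear_combination h2
    rcases mul_eq_zero.mp h3 with h4 | h4
    · exact hq1 (sub_eq_zero.mp h4)
    · exact hqm1 (eq_neg_of_add_eq_zero_left h4)
  have hconj : ∀ z : ℂ, starRingEnd ℂ (e2 γ z) = e2 γ (starRingEnd ℂ z) := by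
    intro z
    rw [e2, e2, ← Complex.exp_conj]
    congr 1
    rw [map_mul, Complex.conj_ofReal]
  rw [hstarW, hE, hE, smul_smul, smul_smul, star_smul]
  have harg1 : -(starRingEnd ℂ (s + Complex.I)) = -(starRingEnd ℂ s) + Complex.I := by
    rw [map_add, Complex.conj_I]; ring
  have harg2 : -(starRingEnd ℂ (t - Complex.I)) = -(starRingEnd ℂ t) - Complex.I := by
    rw [map_sub, Complex.conj_I]; ring
  rw [hstarW, harg1, harg2, ← neg_smul]
  congr 1
  have hmul : ∀ x : ℂ, (qOf γ - (qOf γ)⁻¹) * ((qOf γ - (qOf γ)⁻¹)⁻¹ * x) = x := by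
    intro x
    rw [← mul_assoc, mul_inv_cancel₀ hlam, one_mul]
  rw [hmul, hmul]
  show starRingEnd ℂ _ = _
  rw [map_sub, hconj, hconj, map_neg, neg_neg]
  ring
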